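/- Let Ω : ℝ → Matrix (Fin n) (Fin n) ℂ and suppose Ω has derivative D at the point t (HasDerivAt Ω D t). Then the map s ↦ exp(Ω s) has derivative at t equal to (∑'_{k≥0} (1/(k+1)!) • ad_{Ω t}^k D) * exp(Ω t), where the sum is over all natural numbers k. -/

import Mathlib

open scoped Matrix.Norms.L2Operator
open NormedSpace
set_option synthInstance.maxHeartbeats 1000000
set_option maxHeartbeats 3000000
noncomputable section ExpDerivAux

variable {n : ℕ}

local notation "𝕄" => Matrix (Fin n) (Fin n) ℂ

local instance : NormedAlgebra ℚ 𝕄 := NormedAlgebra.restrictScalars ℚ ℂ 𝕄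

lemma my_norm_one_le : ‖(1 : 𝕄)‖ ≤ 1 := by
  rw [Matrix.cstar_norm_def, map_one]
  exact ContinuousLinearMap.norm_id_le

lemma my_norm_pow_le (x : 𝕄) (k : ℕ) : ‖x ^ k‖ ≤ ‖x‖ ^ k := by
  induction k with
  | zero => simpa using my_norm_one_le
  | succ k ih =>
    rw [pow_succ, pow_succ]
    calc ‖x ^ k * x‖ ≤ ‖x ^ k‖ * ‖x‖ := norm_mul_le _ _
      _ ≤ ‖x‖ ^ k * ‖x‖ := mul_le_mul_of_nonneg_right ih (norm_nonneg _)

lemma my_norm_exp_le (x : 𝕄) : ‖exp x‖ ≤ Real.exp ‖x‖ := by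
  rw [exp_eq_tsum ℂ]
  refine (norm_tsum_le_tsum_norm (norm_expSeries_summable' x)).trans ?_
  rw [Real.exp_eq_exp_ℝ, exp_eq_tsum ℝ]
  refine Summable.tsum_le_tsum (fun k => ?_) (norm_expSeries_summable' x)
    (expSeries_summable' (𝕂 := ℝ) ‖x‖)
  rw [norm_smul]
  simp only [norm_inv, Complex.norm_natCast, smul_eq_mul]
  have h1 : (0:ℝ) ≤ ((k.factorial : ℝ))⁻¹ := by positivity
  calc (↑k.factorial)⁻¹ * ‖x ^ k‖ ≤ (↑k.factorial)⁻¹ * ‖x‖ ^ k :=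
        mul_le_mul_of_nonneg_left (my_norm_pow_le x k) h1
    _ = _ := rfl

lemma my_hasDerivAt_exp_smul (A : 𝕄) (u : ℝ) :
    HasDerivAt (fun v : ℝ => exp (v • A)) (exp (u • A) * A) u := by
  have := hasDerivAt_exp_smul_const (𝕂 := ℝ) A u
  exact this

lemma my_duhamel (A B : 𝕄) :
    exp A - exp B = ∫ u in (0:ℝ)..1, exp (u • A) * (A - B) * exp ((1-u) • B) := by
  have key : ∀ u : ℝ, HasDerivAt (fun v : ℝ => exp (v • A) * exp ((1-v) • B))
      (exp (u • A) * (A - B) * exp ((1-u) • B)) u := by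
    intro u
    have hA := my_hasDerivAt_exp_smul A u
    have hB0 := my_hasDerivAt_exp_smul B (1-u)
    have hlin : HasDerivAt (fun v : ℝ => 1 - v) (-1) u := by
      simpa using (hasDerivAt_id u).const_sub 1
    have hB : HasDerivAt (fun v : ℝ => exp ((1-v) • B))
        (-(exp ((1-u) • B) * B)) u := by
      have := hB0.scomp u hlin
      simpa [Function.comp_def] using this
    have := hA.mul hB
    refine this.congr_deriv ?_
    have hc : exp ((1-u) • B) * B = B * exp ((1-u) • B) :=
      (((Commute.refl B).smul_left (1-u)).exp_left).eq
    simp only [mul_sub, sub_mul, mul_neg, hc, mul_assoc]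
    abel
  have hcont : Continuous fun u : ℝ => exp (u • A) * (A - B) * exp ((1-u) • B) := by
    have h1 : Continuous fun u : ℝ => exp (u • A) :=
      exp_continuous.comp (continuous_id.smul continuous_const)
    have h2 : Continuous fun u : ℝ => exp ((1-u) • B) :=
      exp_continuous.comp ((continuous_const.sub continuous_id).smul continuous_const)
    exact (h1.mul continuous_const).mul h2
  have hftc := intervalIntegral.integral_eq_sub_of_hasDerivAt
    (f := fun v : ℝ => exp (v • A) * exp ((1-v) • B))
    (fun u _ => key u) (hcont.intervalIntegrable 0 1)
  rw [hftc]
  norm_num [exp_zero]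

lemma my_exp_lipschitz (A B : 𝕄) :
    ‖exp A - exp B‖ ≤ ‖A - B‖ * (Real.exp ‖A‖ * Real.exp ‖B‖) := by
  rw [my_duhamel A B]
  have hb : ∀ u ∈ Set.uIoc (0:ℝ) 1,
      ‖exp (u • A) * (A - B) * exp ((1-u) • B)‖ ≤
        Real.exp ‖A‖ * ‖A - B‖ * Real.exp ‖B‖ := by
    intro u hu
    rw [Set.uIoc_of_le zero_le_one] at hu
    obtain ⟨hu0, hu1⟩ := hu
    have e1 : ‖exp (u • A)‖ ≤ Real.exp ‖A‖ := by
      refine (my_norm_exp_le _).trans (Real.exp_le_exp.2 ?_)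
      rw [norm_smul]
      calc ‖u‖ * ‖A‖ ≤ 1 * ‖A‖ := by
            apply mul_le_mul_of_nonneg_right _ (norm_nonneg A)
            rw [Real.norm_eq_abs, abs_of_pos hu0]; exact hu1
        _ = ‖A‖ := one_mul _
    have e2 : ‖exp ((1-u) • B)‖ ≤ Real.exp ‖B‖ := by
      refine (my_norm_exp_le _).trans (Real.exp_le_exp.2 ?_)
      rw [norm_smul]
      calc ‖(1-u)‖ * ‖B‖ ≤ 1 * ‖B‖ := by
            apply mul_le_mul_of_nonneg_right _ (norm_nonneg B)
            rw [Real.norm_eq_abs, abs_of_nonneg (by linarith)]; linarith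
        _ = ‖B‖ := one_mul _
    calc ‖exp (u • A) * (A - B) * exp ((1-u) • B)‖
        ≤ ‖exp (u • A) * (A - B)‖ * ‖exp ((1-u) • B)‖ := norm_mul_le _ _
      _ ≤ (‖exp (u • A)‖ * ‖A - B‖) * ‖exp ((1-u) • B)‖ :=
          mul_le_mul_of_nonneg_right (norm_mul_le _ _) (norm_nonneg _)
      _ ≤ (Real.exp ‖A‖ * ‖A - B‖) * Real.exp ‖B‖ := by
          apply mul_le_mul _ e2 (norm_nonneg _) (by positivity)
          exact mul_le_mul_of_nonneg_right e1 (norm_nonneg _)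
  have h := intervalIntegral.norm_integral_le_of_norm_le_const hb
  calc ‖_‖ ≤ Real.exp ‖A‖ * ‖A - B‖ * Real.exp ‖B‖ * |1 - 0| := h
    _ = ‖A - B‖ * (Real.exp ‖A‖ * Real.exp ‖B‖) := by norm_num; ring



def dexpCLM (W : 𝕄) : 𝕄 →L[ℂ] 𝕄 :=
  ∫ u in (0:ℝ)..1,
    ContinuousLinearMap.mulLeftRight ℂ 𝕄 (exp (u • W)) (exp ((1-u) • W))

lemma contExpSmul (W : 𝕄) : Continuous fun u : ℝ => exp (u • W) :=
  exp_continuous.comp (continuous_id.smul continuous_const)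

lemma contExpSmul' (W : 𝕄) : Continuous fun u : ℝ => exp ((1-u) • W) :=
  exp_continuous.comp ((continuous_const.sub continuous_id).smul continuous_const)

lemma dexpCLM_cont (W : 𝕄) : Continuous fun u : ℝ =>
    ContinuousLinearMap.mulLeftRight ℂ 𝕄 (exp (u • W)) (exp ((1-u) • W)) := by
  exact (((ContinuousLinearMap.mulLeftRight ℂ 𝕄).continuous).comp
    (contExpSmul W)).clm_apply (contExpSmul' W)

lemma dexpCLM_apply (W D : 𝕄) :
    dexpCLM W D = ∫ u in (0:ℝ)..1, exp (u • W) * D * exp ((1-u) • W) := by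
  have h := (ContinuousLinearMap.apply ℂ 𝕄 D).intervalIntegral_comp_comm
    (μ := MeasureTheory.volume) ((dexpCLM_cont W).intervalIntegrable 0 1)
  calc dexpCLM W D
      = (ContinuousLinearMap.apply ℂ 𝕄 D) (∫ u in (0:ℝ)..1,
          ContinuousLinearMap.mulLeftRight ℂ 𝕄 (exp (u • W)) (exp ((1-u) • W))) := rfl
    _ = ∫ u in (0:ℝ)..1, (ContinuousLinearMap.apply ℂ 𝕄 D)
          (ContinuousLinearMap.mulLeftRight ℂ 𝕄 (exp (u • W)) (exp ((1-u) • W))) := h.symm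
    _ = _ := by simp [ContinuousLinearMap.mulLeftRight_apply]


lemma my_hasFDerivAt_exp (W : 𝕄) : HasFDerivAt exp (dexpCLM W) W := by
  rw [hasFDerivAt_iff_isLittleO_nhds_zero, Asymptotics.isLittleO_iff]
  intro c hc
  set C : ℝ := Real.exp (‖W‖ + 1) * Real.exp ‖W‖ * Real.exp ‖W‖ + 1 with hCdef
  have hCpos : 0 < C := by positivity
  have hball : ∀ h : 𝕄, ‖h‖ ≤ 1 →
      ‖exp (W + h) - exp W - dexpCLM W h‖ ≤ C * (‖h‖ * ‖h‖) := by
    intro h hh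
    have e1 : exp (W + h) - exp W
        = ∫ u in (0:ℝ)..1, exp (u • (W+h)) * h * exp ((1-u) • W) := by
      have := my_duhamel (W + h) W
      simpa using this
    rw [e1, dexpCLM_apply]
    have hint1 : IntervalIntegrable
        (fun u : ℝ => exp (u • (W+h)) * h * exp ((1-u) • W))
        MeasureTheory.volume 0 1 :=
      (((contExpSmul (W+h)).mul continuous_const).mul (contExpSmul' W)).intervalIntegrable 0 1
    have hint2 : IntervalIntegrable
        (fun u : ℝ => exp (u • W) * h * exp ((1-u) • W))
        MeasureTheory.volume 0 1 :=
      (((contExpSmul W).mul continuous_const).mul (contExpSmul' W)).intervalIntegrable 0 1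
    rw [← intervalIntegral.integral_sub hint1 hint2]
    have key : ∀ u ∈ Set.uIoc (0:ℝ) 1,
        ‖exp (u • (W+h)) * h * exp ((1-u) • W)
          - exp (u • W) * h * exp ((1-u) • W)‖ ≤ C * (‖h‖ * ‖h‖) := by
      intro u hu
      rw [Set.uIoc_of_le zero_le_one] at hu
      obtain ⟨hu0, hu1⟩ := hu
      have efac : exp (u • (W+h)) * h * exp ((1-u) • W)
            - exp (u • W) * h * exp ((1-u) • W)
          = (exp (u • (W+h)) - exp (u • W)) * h * exp ((1-u) • W) := by
        simp only [sub_mul]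
      rw [efac]
      have hlip : ‖exp (u • (W+h)) - exp (u • W)‖ ≤
          ‖h‖ * (Real.exp (‖W‖ + 1) * Real.exp ‖W‖) := by
        have := my_exp_lipschitz (u • (W+h)) (u • W)
        have hd : ‖u • (W+h) - u • W‖ ≤ ‖h‖ := by
          rw [← smul_sub, add_sub_cancel_left, norm_smul, Real.norm_eq_abs,
            abs_of_pos hu0]
          exact mul_le_of_le_one_left (norm_nonneg h) hu1
        have hn1 : ‖u • (W + h)‖ ≤ ‖W‖ + 1 := by
          rw [norm_smul, Real.norm_eq_abs, abs_of_pos hu0]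
          refine (mul_le_of_le_one_left (norm_nonneg _) hu1).trans ?_
          exact (norm_add_le W h).trans (by linarith)
        have hn2 : ‖u • W‖ ≤ ‖W‖ := by
          rw [norm_smul, Real.norm_eq_abs, abs_of_pos hu0]
          exact mul_le_of_le_one_left (norm_nonneg _) hu1
        refine this.trans ?_
        have hE : Real.exp ‖u • (W+h)‖ * Real.exp ‖u • W‖ ≤
            Real.exp (‖W‖ + 1) * Real.exp ‖W‖ :=
          mul_le_mul (Real.exp_le_exp.2 hn1) (Real.exp_le_exp.2 hn2)
            (Real.exp_pos _).le (Real.exp_pos _).le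
        exact mul_le_mul hd hE (by positivity) (norm_nonneg h)
      have hW : ‖exp ((1-u) • W)‖ ≤ Real.exp ‖W‖ := by
        refine (my_norm_exp_le _).trans (Real.exp_le_exp.2 ?_)
        rw [norm_smul, Real.norm_eq_abs, abs_of_nonneg (by linarith)]
        exact mul_le_of_le_one_left (norm_nonneg _) (by linarith)
      calc ‖(exp (u • (W+h)) - exp (u • W)) * h * exp ((1-u) • W)‖
          ≤ ‖(exp (u • (W+h)) - exp (u • W)) * h‖ * ‖exp ((1-u) • W)‖ :=
            norm_mul_le _ _
        _ ≤ (‖exp (u • (W+h)) - exp (u • W)‖ * ‖h‖) * ‖exp ((1-u) • W)‖ :=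
            mul_le_mul_of_nonneg_right (norm_mul_le _ _) (norm_nonneg _)
        _ ≤ ((‖h‖ * (Real.exp (‖W‖ + 1) * Real.exp ‖W‖)) * ‖h‖) * Real.exp ‖W‖ := by
            refine mul_le_mul ?_ hW (norm_nonneg _) (by positivity)
            exact mul_le_mul_of_nonneg_right hlip (norm_nonneg _)
        _ = (Real.exp (‖W‖ + 1) * Real.exp ‖W‖ * Real.exp ‖W‖) * (‖h‖ * ‖h‖) := by ring
        _ ≤ C * (‖h‖ * ‖h‖) := by
            refine mul_le_mul_of_nonneg_right ?_ (mul_nonneg (norm_nonneg h) (norm_nonneg h))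
            rw [hCdef]; linarith
    have hbd := intervalIntegral.norm_integral_le_of_norm_le_const key
    have h10 : |(1:ℝ) - 0| = 1 := by norm_num
    rw [h10, mul_one] at hbd
    exact hbd
  have hmem : Metric.closedBall (0:𝕄) (min 1 (c / C)) ∈ nhds (0:𝕄) :=
    Metric.closedBall_mem_nhds 0 (lt_min one_pos (div_pos hc hCpos))
  filter_upwards [hmem] with h hh
  rw [Metric.mem_closedBall, dist_zero_right] at hh
  have hh1 : ‖h‖ ≤ 1 := hh.trans (min_le_left _ _)
  have hh2 : ‖h‖ ≤ c / C := hh.trans (min_le_right _ _)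
  calc ‖exp (W + h) - exp W - dexpCLM W h‖ ≤ C * (‖h‖ * ‖h‖) := hball h hh1
    _ ≤ C * ((c / C) * ‖h‖) :=
        mul_le_mul_of_nonneg_left
          (mul_le_mul_of_nonneg_right hh2 (norm_nonneg h)) hCpos.le
    _ = c * ‖h‖ := by field_simp

local instance : NormedRing (Matrix (Fin n) (Fin n) ℂ →L[ℂ] Matrix (Fin n) (Fin n) ℂ) :=
  ContinuousLinearMap.toNormedRing
local instance : NormedAlgebra ℂ (Matrix (Fin n) (Fin n) ℂ →L[ℂ] Matrix (Fin n) (Fin n) ℂ) :=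
  ContinuousLinearMap.toNormedAlgebra
local instance : NormedAlgebra ℚ (Matrix (Fin n) (Fin n) ℂ →L[ℂ] Matrix (Fin n) (Fin n) ℂ) :=
  NormedAlgebra.restrictScalars ℚ ℂ _

def lmulRingHom : 𝕄 →+* (𝕄 →L[ℂ] 𝕄) where
  toFun a := ContinuousLinearMap.mul ℂ 𝕄 a
  map_one' := by ext z; simp
  map_mul' a b := by ext z; simp [mul_assoc]
  map_zero' := by ext z; simp
  map_add' a b := by ext z; simp [add_mul]

def rmulRingHom : 𝕄ᵐᵒᵖ →+* (𝕄 →L[ℂ] 𝕄) where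
  toFun a := (ContinuousLinearMap.mul ℂ 𝕄).flip a.unop
  map_one' := by ext z; simp
  map_mul' a b := by ext z; simp [mul_assoc]
  map_zero' := by ext z; simp
  map_add' a b := by ext z; simp [mul_add]

lemma lmul_cont : Continuous (lmulRingHom (n := n)) :=
  (ContinuousLinearMap.mul ℂ 𝕄).continuous

lemma rmul_cont : Continuous (rmulRingHom (n := n)) :=
  (ContinuousLinearMap.mul ℂ 𝕄).flip.continuous.comp MulOpposite.continuous_unop

lemma adpow_iterate (V D : 𝕄) (k : ℕ) :
    ((ContinuousLinearMap.mul ℂ 𝕄 V - (ContinuousLinearMap.mul ℂ 𝕄).flip V) ^ k) D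
      = (fun X : 𝕄 => V * X - X * V)^[k] D := by
  induction k with
  | zero => simp
  | succ k ih =>
    rw [Function.iterate_succ_apply', pow_succ', ← ih]
    rfl

lemma exp_conj_eq (V D : 𝕄) :
    exp V * D * exp (-V) =
      ∑' k : ℕ, ((1:ℝ)/(k.factorial)) • (fun X : 𝕄 => V * X - X * V)^[k] D := by
  set L : 𝕄 →L[ℂ] 𝕄 := ContinuousLinearMap.mul ℂ 𝕄 V with hLdef
  set R : 𝕄 →L[ℂ] 𝕄 := (ContinuousLinearMap.mul ℂ 𝕄).flip V with hRdef
  have hL : ContinuousLinearMap.mul ℂ 𝕄 (exp V) = exp L :=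
    map_exp lmulRingHom lmul_cont V
  have hR : (ContinuousLinearMap.mul ℂ 𝕄).flip (exp (-V)) = exp (-R) := by
    have h1 : rmulRingHom (MulOpposite.op (exp (-V)))
        = exp (rmulRingHom (MulOpposite.op (-V))) := by
      rw [← exp_op]
      exact map_exp rmulRingHom rmul_cont _
    have h2 : rmulRingHom (n := n) (MulOpposite.op (-V)) = -R := by
      show (ContinuousLinearMap.mul ℂ 𝕄).flip (MulOpposite.unop (MulOpposite.op (-V))) = -R
      rw [MulOpposite.unop_op, map_neg]
    have h3 : rmulRingHom (MulOpposite.op (exp (-V)))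
        = (ContinuousLinearMap.mul ℂ 𝕄).flip (exp (-V)) := rfl
    rw [← h3, h1, h2]
  have hcomm : Commute L (-R) := by
    apply Commute.neg_right
    apply ContinuousLinearMap.ext
    intro z
    show V * (z * V) = (V * z) * V
    rw [mul_assoc]
  have key : exp V * D * exp (-V) = exp (L - R) D := by
    have e0 : exp V * D * exp (-V)
        = (ContinuousLinearMap.mul ℂ 𝕄 (exp V))
            (((ContinuousLinearMap.mul ℂ 𝕄).flip (exp (-V))) D) := by
      simp [mul_assoc]
    rw [e0, hL, hR, ← ContinuousLinearMap.mul_apply, ← exp_add_of_commute hcomm,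
      ← sub_eq_add_neg]
  rw [key, exp_eq_tsum ℂ]
  have happ := ((exp_series_hasSum_exp' (𝕂 := ℂ) (L - R)).mapL
    (ContinuousLinearMap.apply ℂ 𝕄 D)).tsum_eq.symm
  rw [exp_eq_tsum ℂ] at happ
  calc (∑' k : ℕ, ((k.factorial : ℂ))⁻¹ • (L - R) ^ k) D
      = ∑' k : ℕ, (ContinuousLinearMap.apply ℂ 𝕄 D) (((k.factorial : ℂ))⁻¹ • (L - R) ^ k) := by
        exact happ.symm ▸ rfl
    _ = ∑' k : ℕ, ((1:ℝ)/(k.factorial)) • (fun X : 𝕄 => V * X - X * V)^[k] D := by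
        congr 1
        funext k
        have : (ContinuousLinearMap.apply ℂ 𝕄 D) (((k.factorial : ℂ))⁻¹ • (L - R) ^ k)
            = ((k.factorial : ℂ))⁻¹ • (((L - R) ^ k) D) := by
          simp
        rw [this, adpow_iterate V D k]
        rw [← smul_one_smul ℂ ((1:ℝ)/(k.factorial)) ((fun X : 𝕄 => V * X - X * V)^[k] D)]
        congr 1
        simp [Complex.real_smul]


lemma ad_iter_norm_le (W D : 𝕄) (k : ℕ) :
    ‖(fun X : 𝕄 => W * X - X * W)^[k] D‖ ≤ (2 * ‖W‖)^k * ‖D‖ := by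
  induction k with
  | zero => simp
  | succ k ih =>
    rw [Function.iterate_succ_apply']
    set P := (fun X : 𝕄 => W * X - X * W)^[k] D with hP
    calc ‖W * P - P * W‖ ≤ ‖W * P‖ + ‖P * W‖ := norm_sub_le _ _
      _ ≤ ‖W‖ * ‖P‖ + ‖P‖ * ‖W‖ := add_le_add (norm_mul_le _ _) (norm_mul_le _ _)
      _ = 2 * ‖W‖ * ‖P‖ := by ring
      _ ≤ 2 * ‖W‖ * ((2 * ‖W‖)^k * ‖D‖) := by
          apply mul_le_mul_of_nonneg_left ih (by positivity)
      _ = (2 * ‖W‖)^(k+1) * ‖D‖ := by ring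

lemma ad_smul_iterate (W : 𝕄) (u : ℝ) (k : ℕ) (D : 𝕄) :
    (fun X : 𝕄 => (u • W) * X - X * (u • W))^[k] D
      = u^k • ((fun X : 𝕄 => W * X - X * W)^[k] D) := by
  induction k generalizing D with
  | zero => simp
  | succ k ih =>
    rw [Function.iterate_succ_apply', Function.iterate_succ_apply', ih]
    set P := (fun X : 𝕄 => W * X - X * W)^[k] D with hP
    show (u • W) * (u ^ k • P) - (u ^ k • P) * (u • W) = u^(k+1) • (W * P - P * W)
    rw [smul_mul_assoc, mul_smul_comm, smul_mul_assoc, mul_smul_comm, smul_smul, smul_smul,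
      mul_comm u (u^k), ← smul_sub, pow_succ]

lemma conj_exp_smul (W D : 𝕄) (u : ℝ) :
    exp (u • W) * D * exp (-(u • W)) =
      ∑' k : ℕ, ((u^k / k.factorial : ℝ)) • (fun X : 𝕄 => W * X - X * W)^[k] D := by
  rw [exp_conj_eq (u • W) D]
  apply tsum_congr
  intro k
  rw [ad_smul_iterate W u k D, smul_smul]
  congr 1
  field_simp

lemma integral_dexp_eq (W D : 𝕄) :
    (∫ u in (0:ℝ)..1, exp (u • W) * D * exp ((1-u) • W)) =
      (∑' k : ℕ, ((1:ℝ)/((k+1).factorial)) •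
        (fun X : 𝕄 => W * X - X * W)^[k] D) * exp W := by
  have hsplit : ∀ u : ℝ, exp (u • W) * D * exp ((1-u) • W)
      = (exp (u • W) * D * exp (-(u • W))) * exp W := by
    intro u
    have h1 : (1-u) • W = -(u • W) + W := by
      rw [sub_smul, one_smul, sub_eq_neg_add]
    rw [h1, exp_add_of_commute (((Commute.refl W).smul_left u).neg_left), ← mul_assoc]
  have hgcont : Continuous fun u : ℝ => exp (u • W) * D * exp (-(u • W)) := by
    have h1 : Continuous fun u : ℝ => exp (u • W) :=
      exp_continuous.comp (continuous_id.smul continuous_const)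
    have h2 : Continuous fun u : ℝ => exp (-(u • W)) :=
      exp_continuous.comp ((continuous_id.smul continuous_const).neg)
    exact (h1.mul continuous_const).mul h2
  calc (∫ u in (0:ℝ)..1, exp (u • W) * D * exp ((1-u) • W))
      = ∫ u in (0:ℝ)..1, ((ContinuousLinearMap.mul ℂ 𝕄).flip (exp W))
          (exp (u • W) * D * exp (-(u • W))) := by
        apply intervalIntegral.integral_congr
        intro u _
        simpa using hsplit u
    _ = (∫ u in (0:ℝ)..1, exp (u • W) * D * exp (-(u • W))) * exp W := by
        rw [((ContinuousLinearMap.mul ℂ 𝕄).flip (exp W)).intervalIntegral_comp_comm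
          (μ := MeasureTheory.volume) (hgcont.intervalIntegrable 0 1)]
        simp
    _ = (∑' k : ℕ, ((1:ℝ)/((k+1).factorial)) •
          (fun X : 𝕄 => W * X - X * W)^[k] D) * exp W := by
        congr 1
        rw [intervalIntegral.integral_of_le zero_le_one]
        set C : ℕ → 𝕄 := fun k => (fun X : 𝕄 => W * X - X * W)^[k] D with hC
        have hFint : ∀ k : ℕ, MeasureTheory.Integrable
            (fun u : ℝ => ((u^k / k.factorial : ℝ)) • C k)
            (MeasureTheory.volume.restrict (Set.Ioc (0:ℝ) 1)) := by
          intro k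
          exact (((continuous_pow k).div_const _).smul continuous_const).integrableOn_Ioc
        have hbound : ∀ k : ℕ, (∫ u in Set.Ioc (0:ℝ) 1, ‖((u^k / k.factorial : ℝ)) • C k‖) ≤
            (2*‖W‖)^k / k.factorial * ‖D‖ := by
          intro k
          have hnn : 0 ≤ ∫ u in Set.Ioc (0:ℝ) 1, ‖((u^k / k.factorial : ℝ)) • C k‖ :=
            MeasureTheory.integral_nonneg fun u => norm_nonneg _
          have hb : ∀ u ∈ Set.Ioc (0:ℝ) 1,
              ‖‖((u^k / k.factorial : ℝ)) • C k‖‖ ≤ (2*‖W‖)^k / k.factorial * ‖D‖ := by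
            intro u hu
            rw [norm_norm, norm_smul, Real.norm_eq_abs, abs_div,
              abs_of_nonneg (pow_nonneg hu.1.le k), Nat.abs_cast]
            have h1 : u ^ k ≤ 1 := pow_le_one₀ hu.1.le hu.2
            have h2 : ‖C k‖ ≤ (2*‖W‖)^k * ‖D‖ := ad_iter_norm_le W D k
            have h3 : (0:ℝ) < k.factorial := by positivity
            calc u ^ k / k.factorial * ‖C k‖ ≤ 1 / k.factorial * ((2*‖W‖)^k * ‖D‖) := by
                  refine mul_le_mul ?_ h2 (norm_nonneg _) (by positivity)
                  gcongr
              _ = (2*‖W‖)^k / k.factorial * ‖D‖ := by ring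
          have := MeasureTheory.norm_setIntegral_le_of_norm_le_const
            (μ := MeasureTheory.volume) (s := Set.Ioc (0:ℝ) 1)
            (by rw [Real.volume_Ioc]; norm_num)
            (f := fun u : ℝ => ‖((u^k / k.factorial : ℝ)) • C k‖) hb
          rw [Real.volume_real_Ioc] at this
          norm_num at this
          calc (∫ u in Set.Ioc (0:ℝ) 1, ‖((u^k / k.factorial : ℝ)) • C k‖)
              = ‖∫ u in Set.Ioc (0:ℝ) 1, ‖((u^k / k.factorial : ℝ)) • C k‖‖ := by
                rw [Real.norm_eq_abs, abs_of_nonneg hnn]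
            _ ≤ (2*‖W‖)^k / k.factorial * ‖D‖ := this
        have hsummaj : Summable (fun k : ℕ => (2*‖W‖)^k / k.factorial * ‖D‖) :=
          (Real.summable_pow_div_factorial (2*‖W‖)).mul_right ‖D‖
        have hnormsum : Summable
            (fun k : ℕ => ∫ u in Set.Ioc (0:ℝ) 1, ‖((u^k / k.factorial : ℝ)) • C k‖) :=
          Summable.of_nonneg_of_le
            (fun k => MeasureTheory.integral_nonneg fun u => norm_nonneg _)
            hbound hsummaj
        have hs := MeasureTheory.hasSum_integral_of_summable_integral_norm hFint hnormsum
        have hval : ∀ k : ℕ, (∫ u in Set.Ioc (0:ℝ) 1, ((u^k / k.factorial : ℝ)) • C k)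
            = ((1:ℝ)/((k+1).factorial)) • C k := by
          intro k
          rw [_root_.integral_smul_const]
          congr 1
          rw [← intervalIntegral.integral_of_le zero_le_one]
          rw [intervalIntegral.integral_div]
          rw [integral_pow]
          rw [Nat.factorial_succ]
          push_cast
          field_simp
          simp
        have hg : (∫ u in Set.Ioc (0:ℝ) 1, exp (u • W) * D * exp (-(u • W)))
            = ∫ u in Set.Ioc (0:ℝ) 1, (∑' k : ℕ, ((u^k / k.factorial : ℝ)) • C k) := by
          apply MeasureTheory.integral_congr_ae
          exact Filter.Eventually.of_forall fun u => conj_exp_smul W D u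
        rw [hg, ← hs.tsum_eq]
        exact tsum_congr hval


/-- The derivative of the matrix exponential along a path: if `Ω` has derivative `D` at `t`,
then `s ↦ exp (Ω s)` has derivative `(∑' k, (1/(k+1)!) • ad_{Ω t}^k D) * exp (Ω t)` at `t`. -/
theorem exp_hasDerivAt_dexp {n : ℕ} (Ω : ℝ → Matrix (Fin n) (Fin n) ℂ)
    (D : Matrix (Fin n) (Fin n) ℂ) (t : ℝ) (hΩ : HasDerivAt Ω D t) :
    HasDerivAt (fun s : ℝ => NormedSpace.exp (Ω s))
      ((∑' k : ℕ, ((1 : ℝ) / (Nat.factorial (k + 1))) •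
          (fun X : Matrix (Fin n) (Fin n) ℂ => Ω t * X - X * Ω t)^[k] D) *
        NormedSpace.exp (Ω t)) t := by
  have h1 := ((my_hasFDerivAt_exp (Ω t)).restrictScalars ℝ).comp_hasDerivAt t hΩ
  have h2 : dexpCLM (Ω t) D =
      (∑' k : ℕ, ((1 : ℝ) / (Nat.factorial (k + 1))) •
          (fun X : Matrix (Fin n) (Fin n) ℂ => Ω t * X - X * Ω t)^[k] D) *
        NormedSpace.exp (Ω t) := by
    rw [dexpCLM_apply]
    exact integral_dexp_eq (Ω t) D
  rw [← h2]
  exact h1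

end ExpDerivAux
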